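/- On T*ℝ³, the Hamiltonian H_I = p₁²+p₂²+p₃² + a₁(2(q₁²+q₂²+q₃²)² - (2q₁q₃ - q₂²)²) Poisson-commutes with M₁ = (q₁p₂ - q₂p₁) + (q₂p₃ - q₃p₂). -/

import Mathlib

noncomputable def pb {n : ℕ} (f g : (Fin n → ℝ) × (Fin n → ℝ) → ℝ)
    (x : (Fin n → ℝ) × (Fin n → ℝ)) : ℝ :=
  ∑ i : Fin n,
    (fderiv ℝ f x (Pi.single i 1, 0) * fderiv ℝ g x (0, Pi.single i 1)
      - fderiv ℝ f x (0, Pi.single i 1) * fderiv ℝ g x (Pi.single i 1, 0))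

noncomputable def HI (a1 : ℝ) : (Fin 3 → ℝ) × (Fin 3 → ℝ) → ℝ :=
  fun x => (x.2 0)^2 + (x.2 1)^2 + (x.2 2)^2
    + a1 * (2 * ((x.1 0)^2 + (x.1 1)^2 + (x.1 2)^2)^2
      - (2 * x.1 0 * x.1 2 - (x.1 1)^2)^2)
noncomputable def M1 : (Fin 3 → ℝ) × (Fin 3 → ℝ) → ℝ :=
  fun x => (x.1 0 * x.2 1 - x.1 1 * x.2 0) + (x.1 1 * x.2 2 - x.1 2 * x.2 1)

abbrev E3 := (Fin 3 → ℝ) × (Fin 3 → ℝ)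

noncomputable def Qc (i : Fin 3) : E3 →L[ℝ] ℝ :=
  (ContinuousLinearMap.proj i).comp (ContinuousLinearMap.fst ℝ (Fin 3 → ℝ) (Fin 3 → ℝ))
noncomputable def Pc (i : Fin 3) : E3 →L[ℝ] ℝ :=
  (ContinuousLinearMap.proj i).comp (ContinuousLinearMap.snd ℝ (Fin 3 → ℝ) (Fin 3 → ℝ))

lemma hQ (i : Fin 3) (x : E3) : HasFDerivAt (fun y : E3 => y.1 i) (Qc i) x :=
  (Qc i).hasFDerivAt
lemma hP (i : Fin 3) (x : E3) : HasFDerivAt (fun y : E3 => y.2 i) (Pc i) x :=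
  (Pc i).hasFDerivAt

lemma fderiv_HI (a1 : ℝ) (x : E3) (v : E3) :
    fderiv ℝ (HI a1) x v =
      2 * x.2 0 * v.2 0 + 2 * x.2 1 * v.2 1 + 2 * x.2 2 * v.2 2
      + a1 * (8 * ((x.1 0)^2 + (x.1 1)^2 + (x.1 2)^2) * (x.1 0 * v.1 0 + x.1 1 * v.1 1 + x.1 2 * v.1 2)
        - 2 * (2 * x.1 0 * x.1 2 - (x.1 1)^2) * (2 * v.1 0 * x.1 2 + 2 * x.1 0 * v.1 2 - 2 * x.1 1 * v.1 1)) := by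
  have hS : HasFDerivAt (fun y : E3 => y.1 0 * y.1 0 + y.1 1 * y.1 1 + y.1 2 * y.1 2) _ x :=
    (((hQ 0 x).mul (hQ 0 x)).add ((hQ 1 x).mul (hQ 1 x))).add ((hQ 2 x).mul (hQ 2 x))
  have hT : HasFDerivAt (fun y : E3 => 2 * y.1 0 * y.1 2 - y.1 1 * y.1 1) _ x :=
    (((hQ 0 x).const_mul 2).mul (hQ 2 x)).sub ((hQ 1 x).mul (hQ 1 x))
  have h0 : HasFDerivAt _ _ x :=
    ((((hP 0 x).mul (hP 0 x)).add ((hP 1 x).mul (hP 1 x))).add ((hP 2 x).mul (hP 2 x))).add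
      ((((hS.mul hS).const_mul 2).sub (hT.mul hT)).const_mul a1)
  have h : HasFDerivAt (HI a1) _ x :=
    h0.congr_of_eventuallyEq (Filter.Eventually.of_forall fun y => by simp only [HI, Pi.mul_apply, Pi.add_apply, Pi.sub_apply]; ring)
  rw [h.fderiv]
  simp [Qc, Pc]
  ring

lemma fderiv_M1 (x : E3) (v : E3) :
    fderiv ℝ M1 x v =
      (v.1 0 * x.2 1 + x.1 0 * v.2 1 - (v.1 1 * x.2 0 + x.1 1 * v.2 0))
      + (v.1 1 * x.2 2 + x.1 1 * v.2 2 - (v.1 2 * x.2 1 + x.1 2 * v.2 1)) := by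
  have h : HasFDerivAt M1 _ x :=
    (((hQ 0 x).mul (hP 1 x)).sub ((hQ 1 x).mul (hP 0 x))).add
      (((hQ 1 x).mul (hP 2 x)).sub ((hQ 2 x).mul (hP 1 x)))
  rw [h.fderiv]
  simp [Qc, Pc]
  ring

theorem HI_commutes_M1 (a1 : ℝ) : ∀ x, pb (HI a1) M1 x = 0 := by
  intro x
  simp only [pb, Fin.sum_univ_three, fderiv_HI, fderiv_M1]
  simp [Pi.single_apply]
  ring
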